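/- As t → 0⁻, the rescaled torus curves θ ↦ γ(θ,t)/√(−t) converge uniformly in θ ∈ ℝ to the map θ ↦ √2·(cos(k₁ θ), sin(k₁ θ), 0, …, 0) ∈ ℝ^{2m}, the multiplicity-k₁ parametrization of the circle of radius √2 in the first two coordinates. In other words, the tangent flow of the torus curve at t = 0 is the multiplicity k₁ circle. -/

import Mathlib

open Filter Real

/-- Tangent flow at `0`: as `t → 0⁻`, the rescaled torus curves `θ ↦ γ(θ,t)/√(-t)`
converge uniformly in `θ` to `θ ↦ √2 (cos (k₁ θ), sin (k₁ θ), 0,…,0)`, the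
multiplicity-`k₁` parametrization of the circle of radius `√2` in the first two
coordinates (the pair of coordinates with index `jmin`). -/
theorem torus_curve_tangent_flow_at_zero (m : ℕ) (hm : 1 ≤ m) (k : Fin m → ℕ)
    (hkpos : ∀ j, 0 < k j) (hkmono : StrictMono k)
    (r : ℝ → ℝ)
    (hr : ∀ t < (0:ℝ), 0 < r t ∧ ∑ j : Fin m, (r t) ^ (2 * (k j) ^ 2) = -2 * t)
    (γ : ℝ → ℝ → EuclideanSpace ℝ (Fin m × Fin 2))
    (hγ : ∀ (θ t : ℝ) (j : Fin m),
      γ θ t (j, 0) = (r t) ^ ((k j) ^ 2) * Real.cos (k j * θ) ∧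
      γ θ t (j, 1) = (r t) ^ ((k j) ^ 2) * Real.sin (k j * θ))
    (jmin : Fin m) (hjmin : (jmin : ℕ) = 0)
    (L : ℝ → EuclideanSpace ℝ (Fin m × Fin 2))
    (hL : ∀ (θ : ℝ) (j : Fin m),
      (L θ (j, 0) = if j = jmin then Real.sqrt 2 * Real.cos (k jmin * θ) else 0) ∧
      (L θ (j, 1) = if j = jmin then Real.sqrt 2 * Real.sin (k jmin * θ) else 0)) :
    TendstoUniformly (fun t θ => (Real.sqrt (-t))⁻¹ • γ θ t) L
      (nhdsWithin 0 (Set.Iio 0)) := by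
  classical
  have hmin : ∀ i, k jmin ≤ k i := fun i =>
    hkmono.monotone (by simp [Fin.le_def, hjmin])
  set E : Fin m → ℕ := fun i => 2 * k i ^ 2 - 2 * k jmin ^ 2 with hE
  have hEadd : ∀ i, E i + 2 * k jmin ^ 2 = 2 * k i ^ 2 := by
    intro i
    have h1 : k jmin ^ 2 ≤ k i ^ 2 := Nat.pow_le_pow_left (hmin i) 2
    simp only [hE]
    omega
  have hEmin : E jmin = 0 := by simp [hE]
  have hEpos : ∀ i, i ≠ jmin → 0 < E i := by
    intro i hi
    have hlt : jmin < i := by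
      rw [Fin.lt_def, hjmin]
      exact Nat.pos_of_ne_zero (fun h => hi (Fin.ext (by omega)))
    have h1 : k jmin < k i := hkmono hlt
    have h2 : k jmin ^ 2 < k i ^ 2 := Nat.pow_lt_pow_left h1 (by norm_num)
    simp only [hE]
    omega
  set g : ℝ → ℝ := fun ρ => ∑ i : Fin m, ρ ^ E i with hg
  have hg0 : g 0 = 1 := by
    simp only [hg]
    rw [Finset.sum_eq_single jmin]
    · simp [hEmin]
    · intro i _ hi
      exact zero_pow (hEpos i hi).ne'
    · simp
  have hgc : Continuous g := by
    simp only [hg]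
    exact continuous_finset_sum _ (fun i _ => continuous_pow _)
  have hgpos : ∀ ρ : ℝ, 0 < ρ → 0 < g ρ := by
    intro ρ hρ
    simp only [hg]
    exact Finset.sum_pos (fun i _ => pow_pos hρ _) ⟨jmin, Finset.mem_univ _⟩
  -- r tends to 0 as t → 0⁻
  have hrt : Tendsto r (nhdsWithin 0 (Set.Iio 0)) (nhds 0) := by
    rw [Metric.tendsto_nhdsWithin_nhds]
    intro ε hε
    refine ⟨ε ^ (2 * k jmin ^ 2) / 2, by positivity, fun t ht hdist => ?_⟩
    have ht0 : t < 0 := ht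
    obtain ⟨hrp, hrs⟩ := hr t ht0
    have h1 : r t ^ (2 * k jmin ^ 2) ≤ -2 * t := by
      rw [← hrs]
      exact Finset.single_le_sum (f := fun i => r t ^ (2 * k i ^ 2))
        (fun i _ => pow_nonneg hrp.le _) (Finset.mem_univ jmin)
    have h2 : -2 * t < ε ^ (2 * k jmin ^ 2) := by
      rw [Real.dist_eq, sub_zero, abs_of_neg ht0] at hdist
      linarith
    rw [Real.dist_eq, sub_zero, abs_of_pos hrp]
    exact lt_of_pow_lt_pow_left₀ _ hε.le (lt_of_le_of_lt h1 h2)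
  set c : Fin m → ℝ → ℝ := fun j t => (Real.sqrt (-t))⁻¹ * r t ^ (k j ^ 2) with hc
  set l : Fin m → ℝ := fun j => if j = jmin then Real.sqrt 2 else 0 with hl
  set φ : Fin m → ℝ → ℝ := fun j ρ => Real.sqrt (2 * ρ ^ E j / g ρ) with hφ
  have hφ0 : ∀ j, φ j 0 = l j := by
    intro j
    simp only [hφ, hg0, hl]
    by_cases h : j = jmin
    · simp [h, hEmin]
    · rw [zero_pow (hEpos j h).ne']
      simp [h]
  have hct : ∀ j, Tendsto (fun t => c j t) (nhdsWithin 0 (Set.Iio 0)) (nhds (l j)) := by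
    intro j
    have hcont : ContinuousAt (φ j) 0 := by
      apply Real.continuous_sqrt.continuousAt.comp
      exact ((continuous_const.mul (continuous_pow _)).continuousAt).div
        hgc.continuousAt (by rw [hg0]; norm_num)
    have h1 : Tendsto (fun t => φ j (r t)) (nhdsWithin 0 (Set.Iio 0)) (nhds (l j)) := by
      rw [← hφ0 j]
      exact hcont.tendsto.comp hrt
    refine h1.congr' ?_
    filter_upwards [self_mem_nhdsWithin] with t ht
    have ht0 : t < 0 := ht
    obtain ⟨hrp, hrs⟩ := hr t ht0
    have hnt : (0:ℝ) < -t := by linarith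
    have hsq : 0 < Real.sqrt (-t) := Real.sqrt_pos.mpr hnt
    have hsum : r t ^ (2 * k jmin ^ 2) * g (r t) = -2 * t := by
      rw [← hrs]
      simp only [hg]
      rw [Finset.mul_sum]
      refine Finset.sum_congr rfl fun i _ => ?_
      rw [← pow_add]
      congr 1
      have := hEadd i
      omega
    have hg' : g (r t) ≠ 0 := (hgpos _ hrp).ne'
    have hc2 : c j t ^ 2 = 2 * r t ^ E j / g (r t) := by
      simp only [hc]
      rw [mul_pow, inv_pow, Real.sq_sqrt hnt.le, ← pow_mul]
      have h3 : r t ^ (k j ^ 2 * 2) = r t ^ E j * r t ^ (2 * k jmin ^ 2) := by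
        rw [← pow_add]
        congr 1
        have := hEadd j
        omega
      rw [h3, eq_div_iff hg']
      have hinv : (-t)⁻¹ * (-t) = 1 := inv_mul_cancel₀ hnt.ne'
      linear_combination ((-t)⁻¹ * r t ^ E j) * hsum + (2 * r t ^ E j) * hinv
    have hcnn : 0 ≤ c j t := by
      simp only [hc]
      positivity
    calc φ j (r t) = Real.sqrt (c j t ^ 2) := by rw [hc2]
      _ = c j t := Real.sqrt_sq hcnn
  -- sum of errors tends to 0
  have hS : Tendsto (fun t => ∑ j : Fin m, |c j t - l j|) (nhdsWithin 0 (Set.Iio 0))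
      (nhds 0) := by
    have h1 : ∀ j : Fin m, Tendsto (fun t => |c j t - l j|) (nhdsWithin 0 (Set.Iio 0))
        (nhds 0) := by
      intro j
      have := ((hct j).sub (tendsto_const_nhds (x := l j))).abs
      simpa using this
    have h2 := tendsto_finset_sum (Finset.univ : Finset (Fin m))
      (fun j _ => h1 j)
    simpa using h2
  rw [Metric.tendstoUniformly_iff]
  intro ε hε
  have hev : ∀ᶠ t in nhdsWithin (0:ℝ) (Set.Iio 0),
      ∑ j : Fin m, |c j t - l j| < ε / 2 :=
    hS.eventually (Filter.Tendsto.eventually_lt_const (by linarith) tendsto_id)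
  filter_upwards [hev, self_mem_nhdsWithin] with t hSt ht θ
  have hsmul : ∀ q : Fin m × Fin 2,
      ((Real.sqrt (-t))⁻¹ • γ θ t) q = (Real.sqrt (-t))⁻¹ * γ θ t q := fun q => rfl
  have h0 : ∀ j : Fin m,
      dist (L θ (j, 0)) (((Real.sqrt (-t))⁻¹ • γ θ t) (j, 0)) ≤ |c j t - l j| := by
    intro j
    rw [Real.dist_eq, hsmul, (hγ θ t j).1, (hL θ j).1]
    have hL' : (if j = jmin then Real.sqrt 2 * Real.cos (k jmin * θ) else 0)
        = l j * Real.cos (k j * θ) := by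
      by_cases h : j = jmin
      · simp [h, hl]
      · simp [h, hl]
    rw [hL']
    have heq : l j * Real.cos (k j * θ) -
        (Real.sqrt (-t))⁻¹ * (r t ^ (k j ^ 2) * Real.cos (k j * θ))
        = (l j - c j t) * Real.cos (k j * θ) := by
      simp only [hc]; ring
    rw [heq, abs_mul, abs_sub_comm]
    calc |c j t - l j| * |Real.cos (k j * θ)| ≤ |c j t - l j| * 1 := by
          gcongr
          exact Real.abs_cos_le_one _
      _ = |c j t - l j| := mul_one _
  have h1 : ∀ j : Fin m,
      dist (L θ (j, 1)) (((Real.sqrt (-t))⁻¹ • γ θ t) (j, 1)) ≤ |c j t - l j| := by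
    intro j
    rw [Real.dist_eq, hsmul, (hγ θ t j).2, (hL θ j).2]
    have hL' : (if j = jmin then Real.sqrt 2 * Real.sin (k jmin * θ) else 0)
        = l j * Real.sin (k j * θ) := by
      by_cases h : j = jmin
      · simp [h, hl]
      · simp [h, hl]
    rw [hL']
    have heq : l j * Real.sin (k j * θ) -
        (Real.sqrt (-t))⁻¹ * (r t ^ (k j ^ 2) * Real.sin (k j * θ))
        = (l j - c j t) * Real.sin (k j * θ) := by
      simp only [hc]; ring
    rw [heq, abs_mul, abs_sub_comm]
    calc |c j t - l j| * |Real.sin (k j * θ)| ≤ |c j t - l j| * 1 := by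
          gcongr
          exact Real.abs_sin_le_one _
      _ = |c j t - l j| := mul_one _
  have hcoord : ∀ p : Fin m × Fin 2,
      dist (L θ p) (((Real.sqrt (-t))⁻¹ • γ θ t) p) ≤ |c p.1 t - l p.1| := by
    rintro ⟨j, i⟩
    fin_cases i
    · exact h0 j
    · exact h1 j
  have hdist : dist (L θ) ((Real.sqrt (-t))⁻¹ • γ θ t)
      ≤ ∑ p : Fin m × Fin 2, |c p.1 t - l p.1| := by
    rw [EuclideanSpace.dist_eq]
    have h1 : ∑ p : Fin m × Fin 2,
        dist (L θ p) (((Real.sqrt (-t))⁻¹ • γ θ t) p) ^ 2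
        ≤ (∑ p : Fin m × Fin 2, |c p.1 t - l p.1|) ^ 2 := by
      calc ∑ p : Fin m × Fin 2,
            dist (L θ p) (((Real.sqrt (-t))⁻¹ • γ θ t) p) ^ 2
          ≤ ∑ p : Fin m × Fin 2, |c p.1 t - l p.1| ^ 2 :=
            Finset.sum_le_sum (fun p _ => pow_le_pow_left₀ dist_nonneg (hcoord p) 2)
        _ ≤ (∑ p : Fin m × Fin 2, |c p.1 t - l p.1|) ^ 2 :=
            Finset.sum_sq_le_sq_sum_of_nonneg (fun p _ => abs_nonneg _)
    calc Real.sqrt (∑ p : Fin m × Fin 2,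
          dist (L θ p) (((Real.sqrt (-t))⁻¹ • γ θ t) p) ^ 2)
        ≤ Real.sqrt ((∑ p : Fin m × Fin 2, |c p.1 t - l p.1|) ^ 2) :=
          Real.sqrt_le_sqrt h1
      _ = ∑ p : Fin m × Fin 2, |c p.1 t - l p.1| :=
          Real.sqrt_sq (Finset.sum_nonneg fun p _ => abs_nonneg _)
  have hsum2 : ∑ p : Fin m × Fin 2, |c p.1 t - l p.1|
      = 2 * ∑ j : Fin m, |c j t - l j| := by
    rw [Fintype.sum_prod_type, Finset.mul_sum]
    refine Finset.sum_congr rfl fun j _ => ?_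
    rw [Fin.sum_univ_two]
    ring
  rw [hsum2] at hdist
  calc dist (L θ) ((Real.sqrt (-t))⁻¹ • γ θ t)
      ≤ 2 * ∑ j : Fin m, |c j t - l j| := hdist
    _ < 2 * (ε / 2) := by linarith
    _ = ε := by ring
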